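/- One has the identity (θ, 0, 0, 0, 0, 0) = −μ₂ + 4μ₃ + 3μ₄ + 2μ₅ + μ₆ − 2μ₇ + 2μ₈ − 3μ₉ + 6μ₁₀ in ℂ⁶, and the ℤ-submodule of ℂ⁶ generated by the two vectors μ₁ = (1,0,0,0,0,0) and (θ,0,0,0,0,0) is a free ℤ-module of rank 2 which is a direct summand of the ℤ-submodule generated by {μ₁, μ₂, μ₃, μ₄, μ₅, μ₆, μ₇, μ₈, μ₉, μ₁₀}. -/

import Mathlib

open Complex

/-- The sixth root of unity `ω = e^{πi/3} = (1 + i√3)/2`. -/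
noncomputable def ω : ℂ := (1 + Real.sqrt 3 * I) / 2

/-- The basis vectors `μ₁, …, μ₁₀` of the range of the Chern–Connes character `𝐓₆`. -/
noncomputable def μ (θ : ℝ) : Fin 10 → Fin 6 → ℂ :=
  ![![1, 0, 0, 0, 0, 0],
    ![1/6, 1/6, 1/6, 1/6, 1/6, 1/6],
    ![1/6, (1 - ω)/6, -ω/6, -ω/6, -(1/6), -(1/6)],
    ![1/6, -ω/6, (ω - 1)/6, (ω - 1)/6, 1/6, 1/6],
    ![1/6, -(1/6), 1/6, 1/6, -(1/6), -(1/6)],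
    ![1/6, (ω - 1)/6, -ω/6, -ω/6, 1/6, 1/6],
    ![1/3, 0, 0, 1/3, 0, 0],
    ![1/3, 0, 0, -ω/3, 0, 0],
    ![1/2, 0, 0, 0, 0, 1/2],
    ![(θ : ℂ)/6, ω/6, (1 + ω)/18, (1 + ω)/6, 1/12, 1/3]]

private lemma cons_val_five' {α : Type*} (x0 x1 x2 x3 x4 x5 : α) :
    (![x0,x1,x2,x3,x4,x5] : Fin 6 → α) 5 = x5 := rfl

/-- If `θ` is irrational and `p + q θ = 0` with integers `p, q`, then `p = q = 0`. -/
private lemma int_lin_irrat {θ : ℝ} (hθ : Irrational θ) {p q : ℤ}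
    (h : (p : ℝ) + q * θ = 0) : p = 0 ∧ q = 0 := by
  by_cases hq : q = 0
  · subst hq; simp at h; exact ⟨by exact_mod_cast h, rfl⟩
  · exfalso
    apply hθ
    refine ⟨(-p) / q, ?_⟩
    push_cast
    rw [div_eq_iff (by exact_mod_cast hq : (q:ℝ) ≠ 0)]
    linarith

set_option maxHeartbeats 2000000 in
/-- `(θ,0,0,0,0,0) = -μ₂ + 4μ₃ + 3μ₄ + 2μ₅ + μ₆ - 2μ₇ + 2μ₈ - 3μ₉ + 6μ₁₀`,
and the ℤ-submodule generated by `μ₁ = (1,0,…,0)` and `(θ,0,…,0)` is free of rank 2 and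
a direct summand of the ℤ-submodule generated by `{μ₁, …, μ₁₀}`. -/
theorem theta_vector_hexic_case (θ : ℝ) (hθ : Irrational θ) :
    (![(θ : ℂ), 0, 0, 0, 0, 0] : Fin 6 → ℂ)
      = -μ θ 1 + (4 : ℤ) • μ θ 2 + (3 : ℤ) • μ θ 3 + (2 : ℤ) • μ θ 4 + μ θ 5
        - (2 : ℤ) • μ θ 6 + (2 : ℤ) • μ θ 7 - (3 : ℤ) • μ θ 8 + (6 : ℤ) • μ θ 9 ∧
    Module.Free ℤ
      (Submodule.span ℤ ({μ θ 0, ![(θ : ℂ), 0, 0, 0, 0, 0]} : Set (Fin 6 → ℂ))) ∧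
    Module.finrank ℤ
      (Submodule.span ℤ ({μ θ 0, ![(θ : ℂ), 0, 0, 0, 0, 0]} : Set (Fin 6 → ℂ))) = 2 ∧
    Submodule.span ℤ ({μ θ 0, ![(θ : ℂ), 0, 0, 0, 0, 0]} : Set (Fin 6 → ℂ))
      ≤ Submodule.span ℤ (Set.range (μ θ)) ∧
    ∃ P : Submodule ℤ (Fin 6 → ℂ),
      P ≤ Submodule.span ℤ (Set.range (μ θ)) ∧
      Submodule.span ℤ ({μ θ 0, ![(θ : ℂ), 0, 0, 0, 0, 0]} : Set (Fin 6 → ℂ)) ⊓ P = ⊥ ∧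
      Submodule.span ℤ ({μ θ 0, ![(θ : ℂ), 0, 0, 0, 0, 0]} : Set (Fin 6 → ℂ)) ⊔ P
        = Submodule.span ℤ (Set.range (μ θ)) := by
  have sq3 : Real.sqrt 3 ≠ 0 := by positivity
  set v : Fin 6 → ℂ := ![(θ : ℂ), 0, 0, 0, 0, 0] with hv
  -- the explicit values of the μ's
  have m0 : μ θ 0 = ![1, 0, 0, 0, 0, 0] := rfl
  have m1 : μ θ 1 = ![1/6, 1/6, 1/6, 1/6, 1/6, 1/6] := rfl
  have m2 : μ θ 2 = ![1/6, (1 - ω)/6, -ω/6, -ω/6, -(1/6), -(1/6)] := rfl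
  have m3 : μ θ 3 = ![1/6, -ω/6, (ω - 1)/6, (ω - 1)/6, 1/6, 1/6] := rfl
  have m4 : μ θ 4 = ![1/6, -(1/6), 1/6, 1/6, -(1/6), -(1/6)] := rfl
  have m5 : μ θ 5 = ![1/6, (ω - 1)/6, -ω/6, -ω/6, 1/6, 1/6] := rfl
  have m6 : μ θ 6 = ![(1:ℂ)/3, 0, 0, 1/3, 0, 0] := rfl
  have m7 : μ θ 7 = ![(1:ℂ)/3, 0, 0, -ω/3, 0, 0] := rfl
  have m8 : μ θ 8 = ![(1:ℂ)/2, 0, 0, 0, 0, 1/2] := rfl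
  have m9 : μ θ 9 = ![(θ : ℂ)/6, ω/6, (1 + ω)/18, (1 + ω)/6, 1/12, 1/3] := rfl
  -- Part 1: the identity
  have hid : v = -μ θ 1 + (4 : ℤ) • μ θ 2 + (3 : ℤ) • μ θ 3 + (2 : ℤ) • μ θ 4 + μ θ 5
      - (2 : ℤ) • μ θ 6 + (2 : ℤ) • μ θ 7 - (3 : ℤ) • μ θ 8 + (6 : ℤ) • μ θ 9 := by
    rw [m1, m2, m3, m4, m5, m6, m7, m8, m9]
    funext j
    fin_cases j <;>
      simp [hv, ω, cons_val_five', Matrix.cons_val_zero, Matrix.cons_val_one, Matrix.head_cons,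
        Matrix.cons_val_succ', zsmul_eq_mul] <;> ring
  -- linear independence of μ₁ and v over ℤ
  have hli : LinearIndependent ℤ ![μ θ 0, v] := by
    rw [LinearIndependent.pair_iff]
    intro s t hst
    have h0 : s • (1:ℂ) + t • ((θ:ℝ) : ℂ) = 0 := congrFun hst 0
    simp only [zsmul_eq_mul] at h0
    have h0' : ((s : ℝ) + t * θ : ℝ) = 0 := by
      rw [← Complex.ofReal_eq_zero]
      push_cast
      linear_combination h0
    exact int_lin_irrat hθ h0'
  have hrange2 : Set.range ![μ θ 0, v] = ({μ θ 0, v} : Set (Fin 6 → ℂ)) := by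
    rw [Matrix.range_cons, Matrix.range_cons, Matrix.range_empty, Set.union_empty,
      Set.singleton_union, Set.insert_eq, Set.singleton_union]
  have hNspan : Submodule.span ℤ ({μ θ 0, v} : Set (Fin 6 → ℂ))
      = Submodule.span ℤ (Set.range ![μ θ 0, v]) := by rw [hrange2]
  -- N ≤ M
  have hvmemM : v ∈ Submodule.span ℤ (Set.range (μ θ)) := by
    rw [hid]
    have mem : ∀ i : Fin 10, μ θ i ∈ Submodule.span ℤ (Set.range (μ θ)) :=
      fun i => Submodule.subset_span ⟨i, rfl⟩
    exact add_mem (sub_mem (add_mem (sub_mem (add_mem (add_mem (add_mem (add_mem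
      (neg_mem (mem 1)) (Submodule.smul_mem _ _ (mem 2))) (Submodule.smul_mem _ _ (mem 3)))
      (Submodule.smul_mem _ _ (mem 4))) (mem 5)) (Submodule.smul_mem _ _ (mem 6)))
      (Submodule.smul_mem _ _ (mem 7))) (Submodule.smul_mem _ _ (mem 8)))
      (Submodule.smul_mem _ _ (mem 9))
  have hNleM : Submodule.span ℤ ({μ θ 0, v} : Set (Fin 6 → ℂ))
      ≤ Submodule.span ℤ (Set.range (μ θ)) := by
    rw [Submodule.span_le]
    rintro x (rfl | rfl)
    · exact Submodule.subset_span ⟨0, rfl⟩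
    · exact hvmemM
  refine ⟨hid, ?_, ?_, hNleM, ?_⟩
  · rw [hNspan]; exact Module.Free.of_basis (Module.Basis.span hli)
  · rw [hNspan, Module.finrank_eq_card_basis (Module.Basis.span hli)]; simp
  -- direct summand
  refine ⟨Submodule.span ℤ (Set.range ![μ θ 1, μ θ 2, μ θ 3, μ θ 4, μ θ 6, μ θ 7, μ θ 8, μ θ 9]),
    ?_, ?_, ?_⟩
  · rw [Submodule.span_le]
    rintro x ⟨i, rfl⟩
    fin_cases i
    · exact Submodule.subset_span ⟨1, rfl⟩
    · exact Submodule.subset_span ⟨2, rfl⟩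
    · exact Submodule.subset_span ⟨3, rfl⟩
    · exact Submodule.subset_span ⟨4, rfl⟩
    · exact Submodule.subset_span ⟨6, rfl⟩
    · exact Submodule.subset_span ⟨7, rfl⟩
    · exact Submodule.subset_span ⟨8, rfl⟩
    · exact Submodule.subset_span ⟨9, rfl⟩
  · -- intersection is trivial
    rw [eq_bot_iff]
    rintro x hx
    rw [Submodule.mem_inf] at hx
    obtain ⟨hxN, hxP⟩ := hx
    rw [Submodule.mem_span_pair] at hxN
    obtain ⟨a, b, hab⟩ := hxN
    rw [Submodule.mem_span_range_iff_exists_fun] at hxP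
    obtain ⟨c, hc⟩ := hxP
    rw [Fin.sum_univ_eight] at hc
    have he := hab.trans hc.symm
    have h1 : a • (0:ℂ) + b • (0:ℂ)
        = c 0 • ((1:ℂ)/6) + c 1 • ((1 - ω)/6) + c 2 • (-ω/6) + c 3 • (-(1/6):ℂ)
          + c 4 • (0:ℂ) + c 5 • (0:ℂ) + c 6 • (0:ℂ) + c 7 • (ω/6) := congrFun he 1
    have h2 : a • (0:ℂ) + b • (0:ℂ)
        = c 0 • ((1:ℂ)/6) + c 1 • (-ω/6) + c 2 • ((ω - 1)/6) + c 3 • ((1:ℂ)/6)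
          + c 4 • (0:ℂ) + c 5 • (0:ℂ) + c 6 • (0:ℂ) + c 7 • ((1 + ω)/18) := congrFun he 2
    have h3 : a • (0:ℂ) + b • (0:ℂ)
        = c 0 • ((1:ℂ)/6) + c 1 • (-ω/6) + c 2 • ((ω - 1)/6) + c 3 • ((1:ℂ)/6)
          + c 4 • ((1:ℂ)/3) + c 5 • (-ω/3) + c 6 • (0:ℂ) + c 7 • ((1 + ω)/6) := congrFun he 3
    have h4 : a • (0:ℂ) + b • (0:ℂ)
        = c 0 • ((1:ℂ)/6) + c 1 • (-(1/6):ℂ) + c 2 • ((1:ℂ)/6) + c 3 • (-(1/6):ℂ)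
          + c 4 • (0:ℂ) + c 5 • (0:ℂ) + c 6 • (0:ℂ) + c 7 • ((1:ℂ)/12) := congrFun he 4
    have h5 : a • (0:ℂ) + b • (0:ℂ)
        = c 0 • ((1:ℂ)/6) + c 1 • (-(1/6):ℂ) + c 2 • ((1:ℂ)/6) + c 3 • (-(1/6):ℂ)
          + c 4 • (0:ℂ) + c 5 • (0:ℂ) + c 6 • ((1:ℂ)/2) + c 7 • ((1:ℂ)/3) := congrFun he 5
    simp only [zsmul_eq_mul, ω] at h1 h2 h3 h4 h5
    have k1 : ((6*c 0 + 3*c 1 - 3*c 2 - 6*c 3 + 3*c 7 : ℤ) : ℂ)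
        + ((-(3*c 1) - 3*c 2 + 3*c 7 : ℤ) : ℂ) * (Real.sqrt 3 * I) = 0 := by
      push_cast; linear_combination (-36:ℂ) * h1
    have k2 : ((6*c 0 - 3*c 1 - 3*c 2 + 6*c 3 + 3*c 7 : ℤ) : ℂ)
        + ((-(3*c 1) + 3*c 2 + c 7 : ℤ) : ℂ) * (Real.sqrt 3 * I) = 0 := by
      push_cast; linear_combination (-36:ℂ) * h2
    have k3 : ((6*c 0 - 3*c 1 - 3*c 2 + 6*c 3 + 12*c 4 - 6*c 5 + 9*c 7 : ℤ) : ℂ)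
        + ((-(3*c 1) + 3*c 2 - 6*c 5 + 3*c 7 : ℤ) : ℂ) * (Real.sqrt 3 * I) = 0 := by
      push_cast; linear_combination (-36:ℂ) * h3
    have k4 : ((6*c 0 - 6*c 1 + 6*c 2 - 6*c 3 + 3*c 7 : ℤ) : ℂ) = 0 := by
      push_cast; linear_combination (-36:ℂ) * h4
    have k5 : ((6*c 0 - 6*c 1 + 6*c 2 - 6*c 3 + 18*c 6 + 12*c 7 : ℤ) : ℂ) = 0 := by
      push_cast; linear_combination (-36:ℂ) * h5
    have p1 : 6*c 0 + 3*c 1 - 3*c 2 - 6*c 3 + 3*c 7 = 0 := by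
      have := congrArg Complex.re k1; simp at this; exact (Int.cast_eq_zero (α := ℝ)).mp (by push_cast; linarith)
    have q1 : -(3*c 1) - 3*c 2 + 3*c 7 = 0 := by
      have := congrArg Complex.im k1; simp [sq3] at this; exact (Int.cast_eq_zero (α := ℝ)).mp (by push_cast; linarith)
    have p2 : 6*c 0 - 3*c 1 - 3*c 2 + 6*c 3 + 3*c 7 = 0 := by
      have := congrArg Complex.re k2; simp at this; exact (Int.cast_eq_zero (α := ℝ)).mp (by push_cast; linarith)
    have q2 : -(3*c 1) + 3*c 2 + c 7 = 0 := by
      have := congrArg Complex.im k2; simp [sq3] at this; exact (Int.cast_eq_zero (α := ℝ)).mp (by push_cast; linarith)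
    have p3 : 6*c 0 - 3*c 1 - 3*c 2 + 6*c 3 + 12*c 4 - 6*c 5 + 9*c 7 = 0 := by
      have := congrArg Complex.re k3; simp at this; exact (Int.cast_eq_zero (α := ℝ)).mp (by push_cast; linarith)
    have q3 : -(3*c 1) + 3*c 2 - 6*c 5 + 3*c 7 = 0 := by
      have := congrArg Complex.im k3; simp [sq3] at this; exact (Int.cast_eq_zero (α := ℝ)).mp (by push_cast; linarith)
    have p4 : 6*c 0 - 6*c 1 + 6*c 2 - 6*c 3 + 3*c 7 = 0 := by exact_mod_cast k4
    have p5 : 6*c 0 - 6*c 1 + 6*c 2 - 6*c 3 + 18*c 6 + 12*c 7 = 0 := by exact_mod_cast k5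
    have e0 : c 0 = 0 := by omega
    have e1 : c 1 = 0 := by omega
    have e2 : c 2 = 0 := by omega
    have e3 : c 3 = 0 := by omega
    have e4 : c 4 = 0 := by omega
    have e5 : c 5 = 0 := by omega
    have e6 : c 6 = 0 := by omega
    have e7 : c 7 = 0 := by omega
    rw [Submodule.mem_bot, ← hc, e0, e1, e2, e3, e4, e5, e6, e7]
    simp
  · -- the sup is everything
    apply le_antisymm
    · refine sup_le hNleM ?_
      rw [Submodule.span_le]
      rintro x ⟨i, rfl⟩
      fin_cases i
      · exact Submodule.subset_span ⟨1, rfl⟩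
      · exact Submodule.subset_span ⟨2, rfl⟩
      · exact Submodule.subset_span ⟨3, rfl⟩
      · exact Submodule.subset_span ⟨4, rfl⟩
      · exact Submodule.subset_span ⟨6, rfl⟩
      · exact Submodule.subset_span ⟨7, rfl⟩
      · exact Submodule.subset_span ⟨8, rfl⟩
      · exact Submodule.subset_span ⟨9, rfl⟩
    · rw [Submodule.span_le]
      rintro x ⟨i, rfl⟩
      have pm : ∀ j : Fin 10, μ θ j
          ∈ Submodule.span ℤ
            (Set.range ![μ θ 1, μ θ 2, μ θ 3, μ θ 4, μ θ 6, μ θ 7, μ θ 8, μ θ 9])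
          → μ θ j ∈ Submodule.span ℤ ({μ θ 0, v} : Set (Fin 6 → ℂ)) ⊔
            Submodule.span ℤ
              (Set.range ![μ θ 1, μ θ 2, μ θ 3, μ θ 4, μ θ 6, μ θ 7, μ θ 8, μ θ 9]) :=
        fun j h => Submodule.mem_sup_right h
      have pm1 : μ θ 1 ∈ Submodule.span ℤ
          (Set.range ![μ θ 1, μ θ 2, μ θ 3, μ θ 4, μ θ 6, μ θ 7, μ θ 8, μ θ 9]) :=
        Submodule.subset_span ⟨0, rfl⟩
      have pm2 : μ θ 2 ∈ Submodule.span ℤ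
          (Set.range ![μ θ 1, μ θ 2, μ θ 3, μ θ 4, μ θ 6, μ θ 7, μ θ 8, μ θ 9]) :=
        Submodule.subset_span ⟨1, rfl⟩
      have pm3 : μ θ 3 ∈ Submodule.span ℤ
          (Set.range ![μ θ 1, μ θ 2, μ θ 3, μ θ 4, μ θ 6, μ θ 7, μ θ 8, μ θ 9]) :=
        Submodule.subset_span ⟨2, rfl⟩
      have pm4 : μ θ 4 ∈ Submodule.span ℤ
          (Set.range ![μ θ 1, μ θ 2, μ θ 3, μ θ 4, μ θ 6, μ θ 7, μ θ 8, μ θ 9]) :=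
        Submodule.subset_span ⟨3, rfl⟩
      have pm6 : μ θ 6 ∈ Submodule.span ℤ
          (Set.range ![μ θ 1, μ θ 2, μ θ 3, μ θ 4, μ θ 6, μ θ 7, μ θ 8, μ θ 9]) :=
        Submodule.subset_span ⟨4, rfl⟩
      have pm7 : μ θ 7 ∈ Submodule.span ℤ
          (Set.range ![μ θ 1, μ θ 2, μ θ 3, μ θ 4, μ θ 6, μ θ 7, μ θ 8, μ θ 9]) :=
        Submodule.subset_span ⟨5, rfl⟩
      have pm8 : μ θ 8 ∈ Submodule.span ℤ
          (Set.range ![μ θ 1, μ θ 2, μ θ 3, μ θ 4, μ θ 6, μ θ 7, μ θ 8, μ θ 9]) :=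
        Submodule.subset_span ⟨6, rfl⟩
      have pm9 : μ θ 9 ∈ Submodule.span ℤ
          (Set.range ![μ θ 1, μ θ 2, μ θ 3, μ θ 4, μ θ 6, μ θ 7, μ θ 8, μ θ 9]) :=
        Submodule.subset_span ⟨7, rfl⟩
      have hvN : v ∈ Submodule.span ℤ ({μ θ 0, v} : Set (Fin 6 → ℂ)) :=
        Submodule.subset_span (Set.mem_insert_of_mem _ rfl)
      have h5eq : μ θ 5 = v + μ θ 1 - (4 : ℤ) • μ θ 2 - (3 : ℤ) • μ θ 3 - (2 : ℤ) • μ θ 4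
          + (2 : ℤ) • μ θ 6 - (2 : ℤ) • μ θ 7 + (3 : ℤ) • μ θ 8 - (6 : ℤ) • μ θ 9 := by
        rw [hid]; module
      fin_cases i
      · exact Submodule.mem_sup_left (Submodule.subset_span (Set.mem_insert _ _))
      · exact pm 1 pm1
      · exact pm 2 pm2
      · exact pm 3 pm3
      · exact pm 4 pm4
      · have h5mem : μ θ 5 ∈ Submodule.span ℤ ({μ θ 0, v} : Set (Fin 6 → ℂ)) ⊔
            Submodule.span ℤ
              (Set.range ![μ θ 1, μ θ 2, μ θ 3, μ θ 4, μ θ 6, μ θ 7, μ θ 8, μ θ 9]) := by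
          rw [h5eq]
          exact sub_mem (add_mem (sub_mem (add_mem (sub_mem (sub_mem (sub_mem (add_mem
            (Submodule.mem_sup_left hvN) (pm 1 pm1))
            (Submodule.smul_mem _ _ (pm 2 pm2)))
            (Submodule.smul_mem _ _ (pm 3 pm3)))
            (Submodule.smul_mem _ _ (pm 4 pm4)))
            (Submodule.smul_mem _ _ (pm 6 pm6)))
            (Submodule.smul_mem _ _ (pm 7 pm7)))
            (Submodule.smul_mem _ _ (pm 8 pm8)))
            (Submodule.smul_mem _ _ (pm 9 pm9))
        exact h5mem
      · exact pm 6 pm6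
      · exact pm 7 pm7
      · exact pm 8 pm8
      · exact pm 9 pm9
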